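/- For all α ∈ [0,2]: 4·((α+7)/(α+4)) · (Γ(α/2+2)Γ(α+9/2))/(Γ(α+3)Γ(α/2+9/2)) ≤ 2·(α+7)/(α+4). -/

import Mathlib

open Real Filter Finset Topology

/-- Weierstrass-type product lower bound. -/
private lemma aux_prod_one_sub_ge (f : ℕ → ℝ) (hf : ∀ i, 0 ≤ f i ∧ f i ≤ 1) (n : ℕ) :
    1 - ∑ i ∈ Finset.range n, f i ≤ ∏ i ∈ Finset.range n, (1 - f i) := by
  induction n with
  | zero => simp
  | succ n ih =>
    rw [Finset.prod_range_succ, Finset.sum_range_succ]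
    have h1 := (hf n).1
    have h2 := (hf n).2
    have hp : 0 ≤ ∏ i ∈ Finset.range n, (1 - f i) :=
      Finset.prod_nonneg fun i _ => by linarith [(hf i).1, (hf i).2]
    have hs : 0 ≤ ∑ i ∈ Finset.range n, f i :=
      Finset.sum_nonneg fun i _ => (hf i).1
    nlinarith [ih]

/-- The key Gamma-ratio lower bound, proved via Euler's limit formula. -/
private lemma aux_gamma_ratio (α : ℝ) (h0 : 0 ≤ α) (h2 : α ≤ 2) :
    4 / (4 + α) ≤ Real.Gamma (α + 3) * Real.Gamma (α / 2 + 9 / 2) /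
      (Real.Gamma (α / 2 + 3) * Real.Gamma (α + 9 / 2)) := by
  have h4 : (0:ℝ) < 4 + α := by linarith
  set ε : ℕ → ℝ := fun i => (3 * α / 4) / ((α + 3 + i) * (α / 2 + 9 / 2 + i)) with hεdef
  have hden : ∀ i : ℕ, 0 < (α + 3 + (i:ℝ)) * (α / 2 + 9 / 2 + (i:ℝ)) := by
    intro i
    have : (0:ℝ) ≤ i := Nat.cast_nonneg i
    nlinarith
  have hε01 : ∀ i : ℕ, 0 ≤ ε i ∧ ε i ≤ 1 := by
    intro i
    have hd := hden i
    have hci : (0:ℝ) ≤ i := Nat.cast_nonneg i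
    constructor
    · apply div_nonneg (by linarith) hd.le
    · rw [div_le_one hd]
      nlinarith
  -- per-term telescoping bound
  have hstep : ∀ i : ℕ, ε i ≤ α * (3 * α + 13) / (4 + α) *
      (1 / (3 * α + 13 + 4 * (i:ℝ)) - 1 / (3 * α + 17 + 4 * (i:ℝ))) := by
    intro i
    have hci : (0:ℝ) ≤ i := Nat.cast_nonneg i
    have hx1 : (0:ℝ) < 3 * α + 13 + 4 * i := by linarith
    have hx2 : (0:ℝ) < 3 * α + 17 + 4 * i := by linarith
    have hd := hden i
    have e1 : 1 / (3 * α + 13 + 4 * (i:ℝ)) - 1 / (3 * α + 17 + 4 * (i:ℝ))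
        = 4 / ((3 * α + 13 + 4 * (i:ℝ)) * (3 * α + 17 + 4 * (i:ℝ))) := by
      field_simp
      ring
    rw [e1, hεdef]
    simp only
    rw [div_mul_div_comm]
    rw [div_le_div_iff₀ hd (by positivity)]
    -- polynomial inequality
    have hg : 0 ≤ ((3 * α + 13 + 4 * (i:ℝ))^2 + 4 * (3 * α + 13 + 4 * (i:ℝ)))
        - (3 * α + 13) * (α^2 - 6 * α + 5) := by
      nlinarith [sq_nonneg (4 * (i:ℝ)), mul_nonneg hci h0, mul_nonneg (mul_nonneg hci h0) h0,
        mul_nonneg hci hci, mul_nonneg h0 h0, mul_nonneg (mul_nonneg h0 h0) h0]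
    nlinarith [mul_nonneg h0 hg, mul_nonneg (mul_nonneg h0 hci) hg]
  -- partial sums are bounded
  have hsum : ∀ n : ℕ, ∑ i ∈ Finset.range n, ε i ≤ α / (4 + α) := by
    have key : ∀ n : ℕ, ∑ i ∈ Finset.range n, ε i ≤
        α * (3 * α + 13) / (4 + α) * (1 / (3 * α + 13) - 1 / (3 * α + 13 + 4 * (n:ℝ))) := by
      intro n
      induction n with
      | zero => simp
      | succ n ih =>
        rw [Finset.sum_range_succ]
        have h1 := hstep n
        have e2 : (((n:ℕ) + 1 : ℕ) : ℝ) = (n:ℝ) + 1 := by push_cast; ring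
        have e3 : 3 * α + 13 + 4 * ((n:ℝ) + 1) = 3 * α + 17 + 4 * (n:ℝ) := by ring
        rw [e2, e3]
        have : α * (3 * α + 13) / (4 + α) * (1 / (3 * α + 13) - 1 / (3 * α + 13 + 4 * (n:ℝ)))
            + α * (3 * α + 13) / (4 + α) *
              (1 / (3 * α + 13 + 4 * (n:ℝ)) - 1 / (3 * α + 17 + 4 * (n:ℝ)))
            = α * (3 * α + 13) / (4 + α) * (1 / (3 * α + 13) - 1 / (3 * α + 17 + 4 * (n:ℝ))) := by
          ring
        linarith
    intro n
    have h1 := key n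
    have hc : (0:ℝ) ≤ n := Nat.cast_nonneg n
    have hx1 : (0:ℝ) < 3 * α + 13 := by linarith
    have hx2 : (0:ℝ) < 3 * α + 13 + 4 * (n:ℝ) := by linarith
    have h3 : α * (3 * α + 13) / (4 + α) * (1 / (3 * α + 13) - 1 / (3 * α + 13 + 4 * (n:ℝ)))
        ≤ α * (3 * α + 13) / (4 + α) * (1 / (3 * α + 13)) := by
      apply mul_le_mul_of_nonneg_left _ (by positivity)
      have : 0 ≤ 1 / (3 * α + 13 + 4 * (n:ℝ)) := by positivity
      linarith
    have h4' : α * (3 * α + 13) / (4 + α) * (1 / (3 * α + 13)) = α / (4 + α) := by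
      field_simp
    linarith
  -- products are bounded below
  have hprod : ∀ n : ℕ, 4 / (4 + α) ≤ ∏ i ∈ Finset.range n, (1 - ε i) := by
    intro n
    have h1 := aux_prod_one_sub_ge ε hε01 n
    have h2' := hsum n
    have h3 : 4 / (4 + α) = 1 - α / (4 + α) := by
      field_simp
      ring
    linarith
  -- Euler limit
  have hγ1 : 0 < Real.Gamma (α / 2 + 3) := Real.Gamma_pos_of_pos (by linarith)
  have hγ2 : 0 < Real.Gamma (α + 9 / 2) := Real.Gamma_pos_of_pos (by linarith)
  have hT : Tendsto (fun n : ℕ =>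
      (Real.GammaSeq (α + 3) n * Real.GammaSeq (α / 2 + 9 / 2) n) /
        (Real.GammaSeq (α / 2 + 3) n * Real.GammaSeq (α + 9 / 2) n)) atTop
      (𝓝 (Real.Gamma (α + 3) * Real.Gamma (α / 2 + 9 / 2) /
        (Real.Gamma (α / 2 + 3) * Real.Gamma (α + 9 / 2)))) := by
    exact Tendsto.div
      ((Real.GammaSeq_tendsto_Gamma _).mul (Real.GammaSeq_tendsto_Gamma _))
      ((Real.GammaSeq_tendsto_Gamma _).mul (Real.GammaSeq_tendsto_Gamma _))
      (by positivity)
  have hEq : ∀ᶠ n : ℕ in atTop,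
      (Real.GammaSeq (α + 3) n * Real.GammaSeq (α / 2 + 9 / 2) n) /
        (Real.GammaSeq (α / 2 + 3) n * Real.GammaSeq (α + 9 / 2) n)
      = ∏ i ∈ Finset.range (n + 1), (1 - ε i) := by
    filter_upwards [eventually_gt_atTop 0] with n hn
    have hnp : (0:ℝ) < n := by exact_mod_cast hn
    have hfac : (0:ℝ) < (Nat.factorial n : ℝ) := by exact_mod_cast Nat.factorial_pos n
    -- the four partial products
    have hA : 0 < ∏ j ∈ Finset.range (n + 1), (α + 3 + (j:ℝ)) :=
      Finset.prod_pos fun j _ => by have : (0:ℝ) ≤ j := Nat.cast_nonneg j; linarith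
    have hB : 0 < ∏ j ∈ Finset.range (n + 1), (α / 2 + 9 / 2 + (j:ℝ)) :=
      Finset.prod_pos fun j _ => by have : (0:ℝ) ≤ j := Nat.cast_nonneg j; linarith
    have hC : 0 < ∏ j ∈ Finset.range (n + 1), (α / 2 + 3 + (j:ℝ)) :=
      Finset.prod_pos fun j _ => by have : (0:ℝ) ≤ j := Nat.cast_nonneg j; linarith
    have hD : 0 < ∏ j ∈ Finset.range (n + 1), (α + 9 / 2 + (j:ℝ)) :=
      Finset.prod_pos fun j _ => by have : (0:ℝ) ≤ j := Nat.cast_nonneg j; linarith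
    have hpow : (n:ℝ) ^ (α + 3) * (n:ℝ) ^ (α / 2 + 9 / 2)
        = (n:ℝ) ^ (α / 2 + 3) * (n:ℝ) ^ (α + 9 / 2) := by
      rw [← Real.rpow_add hnp, ← Real.rpow_add hnp]
      congr 1
      ring
    have hrw : ∀ i : ℕ, 1 - ε i
        = ((α / 2 + 3 + (i:ℝ)) * (α + 9 / 2 + (i:ℝ))) /
          ((α + 3 + (i:ℝ)) * (α / 2 + 9 / 2 + (i:ℝ))) := by
      intro i
      have hd := hden i
      rw [hεdef]
      simp only
      rw [eq_div_iff hd.ne', sub_mul, one_mul, div_mul_cancel₀ _ hd.ne']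
      ring
    rw [Finset.prod_congr rfl fun i _ => hrw i]
    rw [Finset.prod_div_distrib]
    simp only [Finset.prod_mul_distrib]
    unfold Real.GammaSeq
    rw [div_mul_div_comm, div_mul_div_comm]
    have hPQ : (n:ℝ) ^ (α + 3) * (Nat.factorial n : ℝ) *
        ((n:ℝ) ^ (α / 2 + 9 / 2) * (Nat.factorial n : ℝ))
        = (n:ℝ) ^ (α / 2 + 3) * (Nat.factorial n : ℝ) *
          ((n:ℝ) ^ (α + 9 / 2) * (Nat.factorial n : ℝ)) := by
      linear_combination ((Nat.factorial n : ℝ))^2 * hpow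
    rw [hPQ, div_div_div_comm, div_self (by positivity), one_div, inv_div]
  apply ge_of_tendsto hT
  filter_upwards [hEq] with n h
  rw [h]
  exact hprod (n + 1)

theorem stmt3 (α : ℝ) (hα : α ∈ Set.Icc (0:ℝ) 2) :
    4 * ((α + 7) / (α + 4)) *
      (Real.Gamma (α / 2 + 2) * Real.Gamma (α + 9 / 2)) /
        (Real.Gamma (α + 3) * Real.Gamma (α / 2 + 9 / 2)) ≤
      2 * (α + 7) / (α + 4) := by
  obtain ⟨h0, h2⟩ := hα
  have h4 : (0:ℝ) < α + 4 := by linarith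
  have hγ1 : 0 < Real.Gamma (α / 2 + 2) := Real.Gamma_pos_of_pos (by linarith)
  have hγ2 : 0 < Real.Gamma (α + 9 / 2) := Real.Gamma_pos_of_pos (by linarith)
  have hγ3 : 0 < Real.Gamma (α + 3) := Real.Gamma_pos_of_pos (by linarith)
  have hγ4 : 0 < Real.Gamma (α / 2 + 9 / 2) := Real.Gamma_pos_of_pos (by linarith)
  have hγ5 : 0 < Real.Gamma (α / 2 + 3) := Real.Gamma_pos_of_pos (by linarith)
  have hrec : Real.Gamma (α / 2 + 3) = (α / 2 + 2) * Real.Gamma (α / 2 + 2) := by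
    have e : α / 2 + 3 = (α / 2 + 2) + 1 := by ring
    rw [e, Real.Gamma_add_one (by positivity)]
  have hG := aux_gamma_ratio α h0 h2
  have hmain : 2 * (Real.Gamma (α / 2 + 2) * Real.Gamma (α + 9 / 2))
      ≤ Real.Gamma (α + 3) * Real.Gamma (α / 2 + 9 / 2) := by
    rw [le_div_iff₀ (by positivity)] at hG
    calc 2 * (Real.Gamma (α / 2 + 2) * Real.Gamma (α + 9 / 2))
        = 4 / (4 + α) * (((α / 2 + 2) * Real.Gamma (α / 2 + 2)) * Real.Gamma (α + 9 / 2)) := by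
          field_simp
          ring
      _ = 4 / (4 + α) * (Real.Gamma (α / 2 + 3) * Real.Gamma (α + 9 / 2)) := by rw [hrec]
      _ ≤ Real.Gamma (α + 3) * Real.Gamma (α / 2 + 9 / 2) := hG
  have hK : 0 < Real.Gamma (α / 2 + 2) * Real.Gamma (α + 9 / 2) := mul_pos hγ1 hγ2
  have hB : 0 < Real.Gamma (α + 3) * Real.Gamma (α / 2 + 9 / 2) := mul_pos hγ3 hγ4
  have hnum : 0 ≤ 4 * ((α + 7) / (α + 4)) * (Real.Gamma (α / 2 + 2) * Real.Gamma (α + 9 / 2)) := by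
    positivity
  calc 4 * ((α + 7) / (α + 4)) * (Real.Gamma (α / 2 + 2) * Real.Gamma (α + 9 / 2)) /
        (Real.Gamma (α + 3) * Real.Gamma (α / 2 + 9 / 2))
      ≤ 4 * ((α + 7) / (α + 4)) * (Real.Gamma (α / 2 + 2) * Real.Gamma (α + 9 / 2)) /
        (2 * (Real.Gamma (α / 2 + 2) * Real.Gamma (α + 9 / 2))) := by
        gcongr
    _ = 2 * (α + 7) / (α + 4) := by
        field_simp
        ring
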